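/- With V = U^⊤U as above (n ≥ 3), the matrix V is invertible and its inverse is given explicitly by: (V^{-1})_{ij} = (2n−1)/(n(n−1)) if 1 ≤ i = j ≤ n−1; (n²−3n+1)/(n(n−1)(n−2)) if 1 ≤ i ≠ j ≤ n−1; (2n−3)/((n−1)(n−2)) if i = j = n; 1/(n−1) if exactly one of i, j equals n and the other is in [n−1]; −1/n if (i ≤ n−1 and j = n+i) or (i ≥ n+1 and j = i−n); −1/(n−2) if exactly one of i,j equals n and the other is in {n+1,…,2n−1}; −(n−1)/(n(n−2)) if one index is in {n+1,…,2n−1} and the other is in [n−1] with j ≠ n+i and i ≠ n+j; 2(n−1)/(n(n−2)) if n+1 ≤ i = j ≤ 2n−1; and (n−1)/(n(n−2)) if n+1 ≤ i ≠ j ≤ 2n−1. -/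

import Mathlib

open Matrix

noncomputable def Umat (n : ℕ) : Matrix (Fin n × Fin n) (Fin n ⊕ Fin (n - 1)) ℝ :=
  fun p c =>
    if p.1 = p.2 then 0
    else
      match c with
      | Sum.inl k => if k = p.1 then 1 else 0
      | Sum.inr l => if (p.2 : ℕ) = (l : ℕ) then 1 else 0

noncomputable def Vmat (n : ℕ) : Matrix (Fin n ⊕ Fin (n - 1)) (Fin n ⊕ Fin (n - 1)) ℝ :=
  (Umat n)ᵀ * Umat n

/-- The explicit inverse of `V = UᵀU` from the paper. Here the paper's index `i = n`
(the last out-degree index) corresponds to `Sum.inl i` with `(i : ℕ) = n - 1`, and the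
paper's index `n + j` corresponds to `Sum.inr j`. -/
noncomputable def Winv (n : ℕ) : Matrix (Fin n ⊕ Fin (n - 1)) (Fin n ⊕ Fin (n - 1)) ℝ :=
  fun a b =>
    match a, b with
    | Sum.inl i, Sum.inl j =>
        if (i : ℕ) = n - 1 then
          (if (j : ℕ) = n - 1 then (2 * (n : ℝ) - 3) / (((n : ℝ) - 1) * ((n : ℝ) - 2))
           else 1 / ((n : ℝ) - 1))
        else if (j : ℕ) = n - 1 then 1 / ((n : ℝ) - 1)
        else if i = j then (2 * (n : ℝ) - 1) / ((n : ℝ) * ((n : ℝ) - 1))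
        else ((n : ℝ) ^ 2 - 3 * (n : ℝ) + 1) / ((n : ℝ) * ((n : ℝ) - 1) * ((n : ℝ) - 2))
    | Sum.inl i, Sum.inr l =>
        if (i : ℕ) = n - 1 then -1 / ((n : ℝ) - 2)
        else if (i : ℕ) = (l : ℕ) then -1 / (n : ℝ)
        else -((n : ℝ) - 1) / ((n : ℝ) * ((n : ℝ) - 2))
    | Sum.inr l, Sum.inl j =>
        if (j : ℕ) = n - 1 then -1 / ((n : ℝ) - 2)
        else if (j : ℕ) = (l : ℕ) then -1 / (n : ℝ)
        else -((n : ℝ) - 1) / ((n : ℝ) * ((n : ℝ) - 2))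
    | Sum.inr l, Sum.inr l' =>
        if l = l' then 2 * ((n : ℝ) - 1) / ((n : ℝ) * ((n : ℝ) - 2))
        else ((n : ℝ) - 1) / ((n : ℝ) * ((n : ℝ) - 2))


lemma hsum1 (k p : ℕ) (hp : p < k) (a c : ℝ) :
    ∑ x ∈ Finset.range k, (if x = p then a else c) = a + ((k:ℝ)-1) * c := by
  have h : ∀ x ∈ Finset.range k, (if x = p then a else c) = c + (if x = p then a - c else 0) := by
    intro x _; split_ifs <;> ring
  rw [Finset.sum_congr rfl h, Finset.sum_add_distrib, Finset.sum_const,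
      Finset.sum_ite_eq' (Finset.range k) p (fun _ => a - c), if_pos (Finset.mem_range.mpr hp)]
  simp [nsmul_eq_mul]; ring

lemma hsum2 (k p q : ℕ) (hpq : p ≠ q) (hp : p < k) (hq : q < k) (a b c : ℝ) :
    ∑ x ∈ Finset.range k, (if x = p then a else if x = q then b else c)
      = a + b + ((k:ℝ)-2) * c := by
  have h : ∀ x ∈ Finset.range k, (if x = p then a else if x = q then b else c)
      = c + (if x = p then a - c else 0) + (if x = q then b - c else 0) := by
    intro x _; split_ifs <;> simp_all <;> ring
  rw [Finset.sum_congr rfl h, Finset.sum_add_distrib, Finset.sum_add_distrib, Finset.sum_const,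
      Finset.sum_ite_eq' (Finset.range k) p (fun _ => a - c),
      Finset.sum_ite_eq' (Finset.range k) q (fun _ => b - c),
      if_pos (Finset.mem_range.mpr hp), if_pos (Finset.mem_range.mpr hq)]
  simp [nsmul_eq_mul]; ring

lemma hsum3 (k p q r : ℕ) (hpq : p ≠ q) (hpr : p ≠ r) (hqr : q ≠ r)
    (hp : p < k) (hq : q < k) (hr : r < k) (a b c d : ℝ) :
    ∑ x ∈ Finset.range k, (if x = p then a else if x = q then b else if x = r then c else d)
      = a + b + c + ((k:ℝ)-3) * d := by
  have h : ∀ x ∈ Finset.range k, (if x = p then a else if x = q then b else if x = r then c else d)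
      = d + (if x = p then a - d else 0) + (if x = q then b - d else 0) + (if x = r then c - d else 0) := by
    intro x _; split_ifs <;> simp_all <;> ring
  rw [Finset.sum_congr rfl h, Finset.sum_add_distrib, Finset.sum_add_distrib,
      Finset.sum_add_distrib, Finset.sum_const,
      Finset.sum_ite_eq' (Finset.range k) p (fun _ => a - d),
      Finset.sum_ite_eq' (Finset.range k) q (fun _ => b - d),
      Finset.sum_ite_eq' (Finset.range k) r (fun _ => c - d),
      if_pos (Finset.mem_range.mpr hp), if_pos (Finset.mem_range.mpr hq),
      if_pos (Finset.mem_range.mpr hr)]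
  simp [nsmul_eq_mul]; ring

-- T family : conditions oriented (const = ↑x), sums over Fin k
lemma T1 (k p : ℕ) (c : ℝ) :
    ∑ x : Fin k, (if p = (x:ℕ) then (0:ℝ) else c)
      = if p < k then ((k:ℝ)-1)*c else (k:ℝ)*c := by
  rw [Fin.sum_univ_eq_sum_range (fun x => if p = x then (0:ℝ) else c) k]
  by_cases h : p < k
  · rw [if_pos h]
    have hc : ∀ x ∈ Finset.range k, (if p = x then (0:ℝ) else c) = (if x = p then 0 else c) := by
      intro x _; split_ifs <;> first | rfl | (exfalso; omega)
    rw [Finset.sum_congr rfl hc, hsum1 k p h]; ring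
  · rw [if_neg h]
    have hc : ∀ x ∈ Finset.range k, (if p = x then (0:ℝ) else c) = c := by
      intro x hx; have := Finset.mem_range.mp hx
      rw [if_neg (by omega)]
    rw [Finset.sum_congr rfl hc, Finset.sum_const]; simp [nsmul_eq_mul]

lemma T2in (k p q : ℕ) (hp : p < k) (hq : q < k) (hpq : p ≠ q) (b c : ℝ) :
    ∑ x : Fin k, (if p = (x:ℕ) then (0:ℝ) else if q = (x:ℕ) then b else c)
      = b + ((k:ℝ)-2)*c := by
  rw [Fin.sum_univ_eq_sum_range (fun x => if p = x then (0:ℝ) else if q = x then b else c) k]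
  have hc : ∀ x ∈ Finset.range k, (if p = x then (0:ℝ) else if q = x then b else c)
      = (if x = p then 0 else if x = q then b else c) := by
    intro x _; split_ifs <;> first | rfl | (exfalso; omega)
  rw [Finset.sum_congr rfl hc, hsum2 k p q hpq hp hq]; ring

lemma T2out (k p q : ℕ) (hp : ¬ p < k) (hq : q < k) (b c : ℝ) :
    ∑ x : Fin k, (if p = (x:ℕ) then (0:ℝ) else if q = (x:ℕ) then b else c)
      = b + ((k:ℝ)-1)*c := by
  rw [Fin.sum_univ_eq_sum_range (fun x => if p = x then (0:ℝ) else if q = x then b else c) k]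
  have hc : ∀ x ∈ Finset.range k, (if p = x then (0:ℝ) else if q = x then b else c)
      = (if x = q then b else c) := by
    intro x hx; have := Finset.mem_range.mp hx; split_ifs <;> first | rfl | (exfalso; omega)
  rw [Finset.sum_congr rfl hc, hsum1 k q hq]

lemma T2dup (k p : ℕ) (hp : p < k) (b c : ℝ) :
    ∑ x : Fin k, (if p = (x:ℕ) then (0:ℝ) else if p = (x:ℕ) then b else c)
      = ((k:ℝ)-1)*c := by
  rw [Fin.sum_univ_eq_sum_range (fun x => if p = x then (0:ℝ) else if p = x then b else c) k]
  have hc : ∀ x ∈ Finset.range k, (if p = x then (0:ℝ) else if p = x then b else c)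
      = (if x = p then 0 else c) := by
    intro x _; split_ifs <;> first | rfl | (exfalso; omega)
  rw [Finset.sum_congr rfl hc, hsum1 k p hp]; ring

-- U family : first condition (p = ↑x), second (↑x = q)
lemma U2in (k p q : ℕ) (hp : p < k) (hq : q < k) (hpq : p ≠ q) (b c : ℝ) :
    ∑ x : Fin k, (if p = (x:ℕ) then (0:ℝ) else if (x:ℕ) = q then b else c)
      = b + ((k:ℝ)-2)*c := by
  rw [Fin.sum_univ_eq_sum_range (fun x => if p = x then (0:ℝ) else if x = q then b else c) k]
  have hc : ∀ x ∈ Finset.range k, (if p = x then (0:ℝ) else if x = q then b else c)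
      = (if x = p then 0 else if x = q then b else c) := by
    intro x _; split_ifs <;> first | rfl | (exfalso; omega)
  rw [Finset.sum_congr rfl hc, hsum2 k p q hpq hp hq]; ring

lemma U2out (k p q : ℕ) (hp : ¬ p < k) (hq : q < k) (b c : ℝ) :
    ∑ x : Fin k, (if p = (x:ℕ) then (0:ℝ) else if (x:ℕ) = q then b else c)
      = b + ((k:ℝ)-1)*c := by
  rw [Fin.sum_univ_eq_sum_range (fun x => if p = x then (0:ℝ) else if x = q then b else c) k]
  have hc : ∀ x ∈ Finset.range k, (if p = x then (0:ℝ) else if x = q then b else c)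
      = (if x = q then b else c) := by
    intro x hx; have := Finset.mem_range.mp hx; split_ifs <;> first | rfl | (exfalso; omega)
  rw [Finset.sum_congr rfl hc, hsum1 k q hq]

lemma U2dup (k p : ℕ) (hp : p < k) (b c : ℝ) :
    ∑ x : Fin k, (if p = (x:ℕ) then (0:ℝ) else if (x:ℕ) = p then b else c)
      = ((k:ℝ)-1)*c := by
  rw [Fin.sum_univ_eq_sum_range (fun x => if p = x then (0:ℝ) else if x = p then b else c) k]
  have hc : ∀ x ∈ Finset.range k, (if p = x then (0:ℝ) else if x = p then b else c)
      = (if x = p then 0 else c) := by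
    intro x _; split_ifs <;> first | rfl | (exfalso; omega)
  rw [Finset.sum_congr rfl hc, hsum1 k p hp]; ring

-- S family : all conditions (↑x = const)
lemma S2 (k p q : ℕ) (hp : p < k) (hq : q < k) (hpq : p ≠ q) (b c : ℝ) :
    ∑ x : Fin k, (if (x:ℕ) = p then (0:ℝ) else if (x:ℕ) = q then b else c)
      = b + ((k:ℝ)-2)*c := by
  rw [Fin.sum_univ_eq_sum_range (fun x => if x = p then (0:ℝ) else if x = q then b else c) k]
  rw [hsum2 k p q hpq hp hq]; ring

lemma S3 (k p q r : ℕ) (hp : p < k) (hq : q < k) (hr : r < k)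
    (hpq : p ≠ q) (hpr : p ≠ r) (hqr : q ≠ r) (b c d : ℝ) :
    ∑ x : Fin k, (if (x:ℕ) = p then (0:ℝ) else if (x:ℕ) = q then b else if (x:ℕ) = r then c else d)
      = b + c + ((k:ℝ)-3)*d := by
  rw [Fin.sum_univ_eq_sum_range
    (fun x => if x = p then (0:ℝ) else if x = q then b else if x = r then c else d) k]
  rw [hsum3 k p q r hpq hpr hqr hp hq hr]; ring

lemma S3dup (k p q : ℕ) (hp : p < k) (hq : q < k) (hpq : p ≠ q) (b c d : ℝ) :
    ∑ x : Fin k, (if (x:ℕ) = p then (0:ℝ) else if (x:ℕ) = q then b else if (x:ℕ) = p then c else d)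
      = b + ((k:ℝ)-2)*d := by
  rw [Fin.sum_univ_eq_sum_range
    (fun x => if x = p then (0:ℝ) else if x = q then b else if x = p then c else d) k]
  have hc : ∀ x ∈ Finset.range k, (if x = p then (0:ℝ) else if x = q then b else if x = p then c else d)
      = (if x = p then 0 else if x = q then b else d) := by
    intro x _; split_ifs <;> first | rfl | (exfalso; omega)
  rw [Finset.sum_congr rfl hc, hsum2 k p q hpq hp hq]; ring


lemma sum_ite_ne {α : Type*} [Fintype α] [DecidableEq α] (x : α) (c : ℝ) :
    ∑ y : α, (if x = y then 0 else c) = ((Fintype.card α : ℝ) - 1) * c := by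
  have h : ∀ y ∈ Finset.univ, (if x = y then (0:ℝ) else c) = c - (if x = y then c else 0) := by
    intro y _; split_ifs <;> ring
  rw [Finset.sum_congr rfl h, Finset.sum_sub_distrib, Finset.sum_const,
      Finset.sum_ite_eq Finset.univ x (fun _ => c), if_pos (Finset.mem_univ x)]
  simp [nsmul_eq_mul, Finset.card_univ]; ring

lemma V_ll (n : ℕ) (i k : Fin n) :
    Vmat n (Sum.inl i) (Sum.inl k) = if i = k then (n:ℝ)-1 else 0 := by
  simp only [Vmat, Umat, Matrix.mul_apply, Matrix.transpose_apply, Fintype.sum_prod_type]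
  have h1 : ∀ x : Fin n, (∑ x_1 : Fin n,
      (if x = x_1 then 0 else if i = x then 1 else 0) * if x = x_1 then (0:ℝ) else if k = x then 1 else 0)
      = ((n:ℝ)-1) * ((if i = x then 1 else 0) * (if k = x then 1 else 0)) := by
    intro x
    have h2 : ∀ x_1 ∈ Finset.univ, ((if x = x_1 then 0 else if i = x then 1 else 0) * if x = x_1 then (0:ℝ) else if k = x then 1 else 0)
        = (if x = x_1 then 0 else ((if i = x then (1:ℝ) else 0) * (if k = x then 1 else 0))) := by
      intro y _; split_ifs <;> ring
    rw [Finset.sum_congr rfl h2, sum_ite_ne]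
    simp
  rw [Finset.sum_congr rfl (fun x _ => h1 x)]
  simp only [mul_ite, ite_mul, mul_one, mul_zero, one_mul, zero_mul]
  rw [Finset.sum_ite_eq]
  simp [eq_comm]

lemma V_symm (n : ℕ) (a b : Fin n ⊕ Fin (n-1)) : Vmat n a b = Vmat n b a := by
  have h : (Vmat n)ᵀ = Vmat n := by
    simp [Vmat, Matrix.transpose_mul]
  conv_lhs => rw [← h]
  simp [Matrix.transpose_apply]

lemma V_lr (n : ℕ) (i : Fin n) (l : Fin (n-1)) :
    Vmat n (Sum.inl i) (Sum.inr l) = if (i:ℕ) = (l:ℕ) then 0 else 1 := by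
  have hl : (l:ℕ) < n := lt_of_lt_of_le l.isLt (Nat.sub_le n 1)
  set L : Fin n := ⟨l, hl⟩ with hL
  simp only [Vmat, Umat, Matrix.mul_apply, Matrix.transpose_apply, Fintype.sum_prod_type]
  have hS : ∀ x : Fin n, (∑ x_1 : Fin n, (if x = x_1 then (0:ℝ) else if (x_1:ℕ) = (l:ℕ) then 1 else 0)) = (if x = L then 0 else 1) := by
    intro x
    rw [Finset.sum_eq_single L]
    · simp [hL]
    · intro b _ hb
      have : (b:ℕ) ≠ (l:ℕ) := fun h => hb (Fin.ext h)
      simp [this]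
    · simp
  have h1 : ∀ x : Fin n, (∑ x_1 : Fin n, (if x = x_1 then 0 else if i = x then 1 else 0) *
        if x = x_1 then (0:ℝ) else if (x_1:ℕ) = (l:ℕ) then 1 else 0)
      = (if i = x then 1 else 0) * (if x = L then 0 else 1) := by
    intro x
    rw [← hS x, Finset.mul_sum]
    apply Finset.sum_congr rfl; intro y _; split_ifs <;> ring
  rw [Finset.sum_congr rfl (fun x _ => h1 x)]
  simp only [ite_mul, one_mul, zero_mul]
  rw [Finset.sum_ite_eq]
  simp [Fin.ext_iff, hL]

lemma V_rl (n : ℕ) (i : Fin n) (l : Fin (n-1)) :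
    Vmat n (Sum.inr l) (Sum.inl i) = if (i:ℕ) = (l:ℕ) then 0 else 1 := by
  rw [V_symm, V_lr]

lemma V_rr (n : ℕ) (l l' : Fin (n-1)) :
    Vmat n (Sum.inr l) (Sum.inr l') = if l = l' then (n:ℝ)-1 else 0 := by
  have hl : (l:ℕ) < n := lt_of_lt_of_le l.isLt (Nat.sub_le n 1)
  set L : Fin n := ⟨l, hl⟩ with hL
  simp only [Vmat, Umat, Matrix.mul_apply, Matrix.transpose_apply, Fintype.sum_prod_type]
  have hS : ∀ x : Fin n, (∑ x_1 : Fin n, (if x = x_1 then 0 else if (x_1:ℕ) = (l:ℕ) then 1 else 0) *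
        if x = x_1 then (0:ℝ) else if (x_1:ℕ) = (l':ℕ) then 1 else 0)
      = (if x = L then 0 else if (l:ℕ) = (l':ℕ) then 1 else 0) := by
    intro x
    rw [Finset.sum_eq_single L]
    · simp only [hL]; split_ifs <;> simp_all
    · intro b _ hb
      have : (b:ℕ) ≠ (l:ℕ) := fun h => hb (Fin.ext h)
      simp [this]
    · simp
  rw [Finset.sum_congr rfl (fun x _ => hS x)]
  have h2 : ∀ x ∈ Finset.univ, (if x = L then (0:ℝ) else if (l:ℕ) = (l':ℕ) then 1 else 0)
      = (if L = x then 0 else if (l:ℕ) = (l':ℕ) then 1 else 0) := by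
    intro x _
    by_cases h : x = L <;> simp [h, Ne.symm, eq_comm]
  rw [Finset.sum_congr rfl h2, sum_ite_ne]
  simp only [Fintype.card_fin]
  by_cases h : (l:ℕ) = (l':ℕ)
  · simp [h, Fin.ext h]
  · have h' : l ≠ l' := fun hh => h (by rw [hh])
    simp [h, h']

lemma row_l (n : ℕ) (i : Fin n) (c : Fin n ⊕ Fin (n-1)) :
    (Vmat n * Winv n) (Sum.inl i) c
      = ((n:ℝ)-1) * Winv n (Sum.inl i) c
        + ∑ l : Fin (n-1), (if (i:ℕ) = (l:ℕ) then 0 else 1) * Winv n (Sum.inr l) c := by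
  rw [Matrix.mul_apply, Fintype.sum_sum_type]
  congr 1
  · rw [Finset.sum_eq_single i]
    · rw [V_ll]; simp
    · intro b _ hb; rw [V_ll, if_neg (fun h => hb h.symm), zero_mul]
    · intro h; exact absurd (Finset.mem_univ i) h
  · exact Finset.sum_congr rfl (fun l _ => by rw [V_lr])

lemma row_r (n : ℕ) (m : Fin (n-1)) (c : Fin n ⊕ Fin (n-1)) :
    (Vmat n * Winv n) (Sum.inr m) c
      = (∑ k : Fin n, (if (k:ℕ) = (m:ℕ) then 0 else 1) * Winv n (Sum.inl k) c)
        + ((n:ℝ)-1) * Winv n (Sum.inr m) c := by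
  rw [Matrix.mul_apply, Fintype.sum_sum_type]
  congr 1
  · exact Finset.sum_congr rfl (fun k _ => by rw [V_rl])
  · rw [Finset.sum_eq_single m]
    · rw [V_rr]; simp
    · intro b _ hb; rw [V_rr, if_neg (fun h => hb h.symm), zero_mul]
    · intro h; exact absurd (Finset.mem_univ m) h


lemma VW (n : ℕ) (hn : 3 ≤ n) : Vmat n * Winv n = 1 := by
  have hn' : (3:ℝ) ≤ (n:ℝ) := by exact_mod_cast hn
  have hn0 : (n:ℝ) ≠ 0 := by linarith
  have hn1 : (n:ℝ) - 1 ≠ 0 := by linarith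
  have hn2 : (n:ℝ) - 2 ≠ 0 := by linarith
  have hc : ((n - 1 : ℕ) : ℝ) = (n:ℝ) - 1 := by
    rw [Nat.cast_sub (by omega : 1 ≤ n), Nat.cast_one]
  ext a c
  rcases a with i | m <;> rcases c with j | m'
  · -- ll
    rw [row_l]
    simp only [Winv, Matrix.one_apply, Sum.inl.injEq]
    by_cases hij : i = j
    · subst hij
      by_cases hi : (i:ℕ) = n - 1
      · simp only [hi, eq_self_iff_true, if_true, if_false, ite_mul, zero_mul, one_mul]
        rw [T1 (n-1) (n-1) (-1 / ((n:ℝ)-2))]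
        rw [if_neg (by omega), hc]
        field_simp; ring
      · simp only [hi, eq_self_iff_true, if_true, if_false, ite_mul, zero_mul, one_mul]
        rw [T2dup (n-1) (i:ℕ) (by have := i.isLt; omega)]
        rw [hc]; field_simp; ring
    · have hij' : (i:ℕ) ≠ (j:ℕ) := fun h => hij (Fin.ext h)
      by_cases hi : (i:ℕ) = n - 1
      · have hj : ¬ (j:ℕ) = n - 1 := by omega
        simp only [hi, hj, hij, eq_self_iff_true, if_true, if_false, ite_mul, zero_mul, one_mul]
        rw [T2out (n-1) (n-1) (j:ℕ) (by omega) (by have := j.isLt; omega)]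
        rw [hc]; field_simp; ring
      · by_cases hj : (j:ℕ) = n - 1
        · simp only [hi, hj, hij, eq_self_iff_true, if_true, if_false, ite_mul, zero_mul, one_mul]
          rw [T1 (n-1) (i:ℕ) (-1 / ((n:ℝ)-2))]
          rw [if_pos (by have := i.isLt; omega), hc]
          field_simp; ring
        · simp only [hi, hj, hij, hij', eq_self_iff_true, if_true, if_false, ite_mul, zero_mul, one_mul]
          rw [T2in (n-1) (i:ℕ) (j:ℕ) (by have := i.isLt; omega) (by have := j.isLt; omega) hij']
          rw [hc]; field_simp; ring
  · -- lr
    rw [row_l]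
    simp only [Winv, Matrix.one_apply, Fin.ext_iff]
    rw [if_neg (by simp : ¬ (Sum.inl i = Sum.inr m'))]
    by_cases hi : (i:ℕ) = n - 1
    · simp only [hi, eq_self_iff_true, if_true, if_false, ite_mul, zero_mul, one_mul]
      rw [U2out (n-1) (n-1) (m':ℕ) (by omega) m'.isLt]
      rw [hc]; field_simp; ring
    · by_cases him : (i:ℕ) = (m':ℕ)
      · have hi' : ¬ ((m':ℕ)) = n - 1 := by have := m'.isLt; omega
        simp only [him, hi', eq_self_iff_true, if_true, if_false, ite_mul, zero_mul, one_mul]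
        rw [U2dup (n-1) (m':ℕ) m'.isLt]
        rw [hc]; field_simp; ring
      · simp only [hi, him, eq_self_iff_true, if_true, if_false, ite_mul, zero_mul, one_mul]
        rw [U2in (n-1) (i:ℕ) (m':ℕ) (by have := i.isLt; omega) m'.isLt him]
        rw [hc]; field_simp; ring
  · -- rl
    rw [row_r]
    simp only [Winv, Matrix.one_apply, Fin.ext_iff]
    rw [if_neg (by simp : ¬ (Sum.inr m = Sum.inl j))]
    have hm : (m:ℕ) < n - 1 := m.isLt
    by_cases hj : (j:ℕ) = n - 1
    · simp only [hj, eq_self_iff_true, if_true, if_false, ite_mul, zero_mul, one_mul]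
      rw [S2 n (m:ℕ) (n-1) (by omega) (by omega) (by omega)]
      field_simp; ring
    · by_cases hjm : (j:ℕ) = (m:ℕ)
      · have hj' : ¬ (m:ℕ) = n - 1 := by omega
        simp only [hjm, hj', eq_self_iff_true, if_true, if_false, ite_mul, zero_mul, one_mul]
        rw [S3dup n (m:ℕ) (n-1) (by omega) (by omega) (by omega)]
        field_simp; ring
      · simp only [hj, hjm, eq_self_iff_true, if_true, if_false, ite_mul, zero_mul, one_mul]
        rw [S3 n (m:ℕ) (n-1) (j:ℕ) (by omega) (by omega) j.isLt (by omega) (by omega) (by omega)]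
        field_simp; ring
  · -- rr
    rw [row_r]
    simp only [Winv, Matrix.one_apply, Sum.inr.injEq, Fin.ext_iff]
    have hm : (m:ℕ) < n - 1 := m.isLt
    have hm' : (m':ℕ) < n - 1 := m'.isLt
    by_cases hmm : (m:ℕ) = (m':ℕ)
    · have h1 : ¬ (m':ℕ) = n - 1 := by omega
      simp only [hmm, h1, eq_self_iff_true, if_true, if_false, ite_mul, zero_mul, one_mul]
      rw [S3dup n (m':ℕ) (n-1) (by omega) (by omega) (by omega)]
      field_simp; ring
    · simp only [hmm, eq_self_iff_true, if_true, if_false, ite_mul, zero_mul, one_mul]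
      rw [S3 n (m:ℕ) (n-1) (m':ℕ) (by omega) (by omega) (by omega) (by omega) hmm (by omega)]
      field_simp; ring

theorem stmt5 (n : ℕ) (hn : 3 ≤ n) :
    IsUnit (Vmat n) ∧ Vmat n * Winv n = 1 ∧ Winv n * Vmat n = 1 ∧ (Vmat n)⁻¹ = Winv n := by
  have h1 : Vmat n * Winv n = 1 := VW n hn
  have h2 : Winv n * Vmat n = 1 := mul_eq_one_comm.mp h1
  exact ⟨IsUnit.of_mul_eq_one _ h1, h1, h2, Matrix.inv_eq_right_inv h1⟩
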